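/- (Linear representation of the optimal value function in a Block MDP.) Let r_h(x,a) ∈ [0,1] be rewards for h ∈ {1, …, H}, and define the optimal value functions by V*_{H+1} ≡ 0 and V*_h(x) := max_{a∈A} ( r_h(x,a) + Σ_{y∈X} P(y|x,a)·V*_{h+1}(y) ) for h = H, …, 1. Then for every h ∈ {1, …, H} there exists θ_h ∈ ℝ^{S×A} with Euclidean norm ‖θ_h‖₂ ≤ √(|S|·|A|)·(H − h) such that V*_h(x) = max_{a∈A} ( r_h(x,a) + θ_h(f(x), a) ) for every x ∈ X. -/
import Mathlib


open Finset

/-- **Linear representation of the optimal value function in a Block MDP.**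
`p s a s' = p(s'|s,a)`, `q s y = q(y|s)` (supported on the fibers of `f`), so the
context transition kernel is `P(y|x,a) = q(y|f(y))·p(f(y)|f(x),a)`.  The optimal value
functions `V*_h` are defined backwards from `V*_{H+1} = 0` by the Bellman recursion. -/
theorem optimal_value_linear_representation
    {X S A : Type*} [Fintype X] [Fintype S] [Fintype A] [Nonempty A]
    (f : X → S) (hf : Function.Surjective f)
    (p : S → A → S → ℝ) (hp : ∀ s a, (∀ s', 0 ≤ p s a s') ∧ ∑ s', p s a s' = 1)
    (q : S → X → ℝ)
    (hq : ∀ s, (∀ y, 0 ≤ q s y) ∧ (∀ y, f y ≠ s → q s y = 0) ∧ ∑ y, q s y = 1)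
    (H : ℕ) (hH : 1 ≤ H)
    (r : ℕ → X → A → ℝ)
    (hr : ∀ h, 1 ≤ h → h ≤ H → ∀ x a, 0 ≤ r h x a ∧ r h x a ≤ 1)
    (V : ℕ → X → ℝ)
    (hV0 : ∀ x, V (H + 1) x = 0)
    (hVrec : ∀ h, 1 ≤ h → h ≤ H → ∀ x,
      V h x = Finset.univ.sup' Finset.univ_nonempty fun a : A =>
        r h x a + ∑ y, q (f y) y * p (f x) a (f y) * V (h + 1) y) :
    ∀ h, 1 ≤ h → h ≤ H →
      ∃ θ : S × A → ℝ,
        Real.sqrt (∑ t : S × A, θ t ^ 2)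
            ≤ Real.sqrt ((Fintype.card S : ℝ) * (Fintype.card A : ℝ)) * ((H : ℝ) - (h : ℝ))
        ∧ ∀ x, V h x = Finset.univ.sup' Finset.univ_nonempty fun a : A =>
            r h x a + θ (f x, a) := by
  -- kernel sums to one
  have kernel1 : ∀ s a, ∑ y, q (f y) y * p s a (f y) = 1 := by
    intro s a
    have hpt : ∀ y : X, q (f y) y * p s a (f y) = ∑ s', q s' y * p s a s' := by
      intro y
      rw [Finset.sum_eq_single (f y)]
      · intro s' _ hne
        rw [(hq s').2.1 y (fun h => hne h.symm), zero_mul]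
      · intro h; exact absurd (Finset.mem_univ _) h
    simp_rw [hpt]
    rw [Finset.sum_comm]
    have : ∀ s' : S, ∑ y, q s' y * p s a s' = p s a s' := by
      intro s'
      rw [← Finset.sum_mul, (hq s').2.2, one_mul]
    simp_rw [this]
    exact (hp s a).2
  have qpnn : ∀ s a (y : X), 0 ≤ q (f y) y * p s a (f y) := fun s a y =>
    mul_nonneg ((hq (f y)).1 y) ((hp s a).1 (f y))
  -- value function bounds by downward induction
  have Vbound : ∀ k, k ≤ H → ∀ x, 0 ≤ V (H + 1 - k) x ∧ V (H + 1 - k) x ≤ (k : ℝ) := by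
    intro k
    induction k with
    | zero => intro _ x; simp [hV0]
    | succ k ih =>
      intro hk x
      have hk' : k ≤ H := Nat.le_of_succ_le hk
      have hh1 : 1 ≤ H + 1 - (k + 1) := by omega
      have hh2 : H + 1 - (k + 1) ≤ H := by omega
      have heq : H + 1 - (k + 1) + 1 = H + 1 - k := by omega
      have hrec := hVrec _ hh1 hh2 x
      rw [heq] at hrec
      rw [hrec]
      constructor
      · refine le_trans ?_ (Finset.le_sup' _ (Finset.mem_univ (Classical.arbitrary A)))
        have := hr _ hh1 hh2 x (Classical.arbitrary A)
        have hsum : 0 ≤ ∑ y, q (f y) y * p (f x) (Classical.arbitrary A) (f y) * V (H + 1 - k) y :=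
          Finset.sum_nonneg fun y _ =>
            mul_nonneg (qpnn _ _ y) (ih hk' y).1
        linarith [this.1]
      · apply Finset.sup'_le
        intro a _
        have hra := hr _ hh1 hh2 x a
        have hidx : H + 1 - (k + 1) = H - k := by omega
        rw [hidx] at hra
        have hsum : ∑ y, q (f y) y * p (f x) a (f y) * V (H + 1 - k) y ≤ (k : ℝ) := by
          calc ∑ y, q (f y) y * p (f x) a (f y) * V (H + 1 - k) y
              ≤ ∑ y, q (f y) y * p (f x) a (f y) * (k : ℝ) :=
                Finset.sum_le_sum fun y _ =>
                  mul_le_mul_of_nonneg_left (ih hk' y).2 (qpnn _ _ y)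
            _ = (∑ y, q (f y) y * p (f x) a (f y)) * (k : ℝ) := by rw [Finset.sum_mul]
            _ = (k : ℝ) := by rw [kernel1, one_mul]
        push_cast
        linarith [hra.2]
  intro h hh1 hhH
  -- bounds on V (h+1)
  have hVh1 : ∀ y, 0 ≤ V (h + 1) y ∧ V (h + 1) y ≤ (H : ℝ) - (h : ℝ) := by
    intro y
    have hk : H - h ≤ H := Nat.sub_le _ _
    have heq : H + 1 - (H - h) = h + 1 := by omega
    have := Vbound (H - h) hk y
    rw [heq] at this
    have hcast : ((H - h : ℕ) : ℝ) = (H : ℝ) - (h : ℝ) := by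
      push_cast [Nat.cast_sub hhH]; ring
    rw [hcast] at this
    exact this
  have hHh : (0 : ℝ) ≤ (H : ℝ) - (h : ℝ) := by
    have : (h : ℝ) ≤ (H : ℝ) := Nat.cast_le.mpr hhH
    linarith
  refine ⟨fun t => ∑ y, q (f y) y * p t.1 t.2 (f y) * V (h + 1) y, ?_, ?_⟩
  · -- norm bound
    have hθb : ∀ t : S × A,
        (∑ y, q (f y) y * p t.1 t.2 (f y) * V (h + 1) y) ^ 2 ≤ ((H : ℝ) - (h : ℝ)) ^ 2 := by
      intro t
      have h0 : 0 ≤ ∑ y, q (f y) y * p t.1 t.2 (f y) * V (h + 1) y :=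
        Finset.sum_nonneg fun y _ => mul_nonneg (qpnn _ _ y) (hVh1 y).1
      have h1 : ∑ y, q (f y) y * p t.1 t.2 (f y) * V (h + 1) y ≤ (H : ℝ) - (h : ℝ) := by
        calc ∑ y, q (f y) y * p t.1 t.2 (f y) * V (h + 1) y
            ≤ ∑ y, q (f y) y * p t.1 t.2 (f y) * ((H : ℝ) - (h : ℝ)) :=
              Finset.sum_le_sum fun y _ =>
                mul_le_mul_of_nonneg_left (hVh1 y).2 (qpnn _ _ y)
          _ = (∑ y, q (f y) y * p t.1 t.2 (f y)) * ((H : ℝ) - (h : ℝ)) := by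
              rw [Finset.sum_mul]
          _ = (H : ℝ) - (h : ℝ) := by rw [kernel1, one_mul]
      exact pow_le_pow_left₀ h0 h1 2 |>.trans_eq rfl
    have hsum : ∑ t : S × A, (∑ y, q (f y) y * p t.1 t.2 (f y) * V (h + 1) y) ^ 2
        ≤ (Fintype.card (S × A) : ℝ) * ((H : ℝ) - (h : ℝ)) ^ 2 := by
      calc ∑ t : S × A, (∑ y, q (f y) y * p t.1 t.2 (f y) * V (h + 1) y) ^ 2
          ≤ ∑ _t : S × A, ((H : ℝ) - (h : ℝ)) ^ 2 :=
            Finset.sum_le_sum fun t _ => hθb t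
        _ = (Fintype.card (S × A) : ℝ) * ((H : ℝ) - (h : ℝ)) ^ 2 := by
            rw [Finset.sum_const, Finset.card_univ, nsmul_eq_mul]
    calc Real.sqrt (∑ t : S × A, (∑ y, q (f y) y * p t.1 t.2 (f y) * V (h + 1) y) ^ 2)
        ≤ Real.sqrt ((Fintype.card (S × A) : ℝ) * ((H : ℝ) - (h : ℝ)) ^ 2) :=
          Real.sqrt_le_sqrt hsum
      _ = Real.sqrt ((Fintype.card S : ℝ) * (Fintype.card A : ℝ)) * ((H : ℝ) - (h : ℝ)) := by
          rw [Real.sqrt_mul (by positivity), Real.sqrt_sq hHh, Fintype.card_prod]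
          push_cast
          ring_nf
  · intro x
    exact hVrec h hh1 hhH x
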